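/- There exists an absolute constant C > 0 such that the following holds. Let n > m ≥ 0 be integers and let ξ₁,…,ξₙ be an m-dependent sequence of mean-zero random vectors in ℝ^d, i.e. {ξ₁,…,ξᵢ} is independent of {ξ_{i+m+1},…,ξₙ} for every i. Set W := Σ_{i=1}^n ξᵢ, assume Var(W) = I_d and E[|ξᵢ|⁶] ≤ δ⁶ for every i and some δ > 0. Let m̃ := m ∨ 1, and for u ∈ {1,…,n} set A_u := {v : |v−u| ≤ m}, for v ∈ A_u set A_{uv} := {r : |r−u| ≤ m or |r−v| ≤ m}, and W^{(uv)} := W − Σ_{r ∈ A_{uv}} ξ_r. Then for all u ∈ {1,…,n}, v ∈ A_u and r ∈ A_{uv}: E[(ξ_r · W^{(uv)})²] ≤ C ( E[|ξ_r|²] + m̃² δ⁴ ). -/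

import Mathlib

open MeasureTheory ProbabilityTheory Real Matrix Filter
open scoped ENNReal NNReal Topology RealInnerProductSpace

noncomputable section

namespace Paper

/-- `Ψ(x) = x (|log x| ∨ 1)`. -/
def Psi (x : ℝ) : ℝ := x * max |Real.log x| 1

/-- Hilbert–Schmidt (Frobenius) norm of a matrix. -/
def hsNorm {d : ℕ} (M : Matrix (Fin d) (Fin d) ℝ) : ℝ :=
  Real.sqrt (∑ j, ∑ k, M j k ^ 2)

/-- Operator norm of a matrix, acting on Euclidean space. -/
def opNorm {d : ℕ} (M : Matrix (Fin d) (Fin d) ℝ) : ℝ :=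
  ‖LinearMap.toContinuousLinearMap (Matrix.toEuclideanLin M)‖

/-- Multiplication of a Euclidean vector by a matrix. -/
def mulVecE {d : ℕ} (M : Matrix (Fin d) (Fin d) ℝ) (x : EuclideanSpace ℝ (Fin d)) :
    EuclideanSpace ℝ (Fin d) :=
  (WithLp.equiv 2 (Fin d → ℝ)).symm (M.mulVec ((WithLp.equiv 2 (Fin d → ℝ)) x))

/-- Covariance matrix of a random vector. -/
def covMatrix {d : ℕ} {Ω : Type*} [MeasurableSpace Ω] (μ : Measure Ω)
    (Y : Ω → EuclideanSpace ℝ (Fin d)) : Matrix (Fin d) (Fin d) ℝ :=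
  Matrix.of fun j k =>
    (∫ ω, Y ω j * Y ω k ∂μ) - (∫ ω, Y ω j ∂μ) * (∫ ω, Y ω k ∂μ)

/-- The standard Gaussian distribution `N(0, I_d)` on `ℝ^d`. -/
def stdGaussian (d : ℕ) : Measure (EuclideanSpace ℝ (Fin d)) :=
  (Measure.pi fun _ : Fin d => gaussianReal 0 1).map
    (WithLp.equiv 2 (Fin d → ℝ)).symm

/-- The centered Gaussian distribution `N(0, S)` on `ℝ^d` for a positive semidefinite `S`,
realized as the pushforward of the standard Gaussian by the square root of `S`. -/
def gaussianOf {d : ℕ} {S : Matrix (Fin d) (Fin d) ℝ} (hS : S.PosSemidef) :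
    Measure (EuclideanSpace ℝ (Fin d)) :=
  (stdGaussian d).map (mulVecE ((hS.1.eigenvectorUnitary : Matrix (Fin d) (Fin d) ℝ) *
    diagonal (fun i => Real.sqrt (hS.1.eigenvalues i)) *
    (star hS.1.eigenvectorUnitary : Matrix (Fin d) (Fin d) ℝ)))

/-- The largest eigenvalue of a symmetric matrix. -/
def lambdaMax {d : ℕ} {A : Matrix (Fin d) (Fin d) ℝ} (hA : A.IsHermitian) : ℝ :=
  ⨆ i, hA.eigenvalues i

/-- `Λ₁(A) = √(∑_{j=1}^d λ_j(A)²)` for the eigenvalues `λ₁(A) ≥ ⋯ ≥ λ_d(A)`. -/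
def Lambda1 {d : ℕ} {A : Matrix (Fin d) (Fin d) ℝ} (hA : A.IsHermitian) : ℝ :=
  Real.sqrt (∑ i, hA.eigenvalues i ^ 2)

/-- `Λ₂(A) = √(∑_{j=2}^d λ_j(A)²)` for the eigenvalues `λ₁(A) ≥ ⋯ ≥ λ_d(A)`. -/
def Lambda2 {d : ℕ} {A : Matrix (Fin d) (Fin d) ℝ} (hA : A.IsHermitian) : ℝ :=
  Real.sqrt ((∑ i, hA.eigenvalues i ^ 2) - lambdaMax hA ^ 2)

/-- `κ(A) = (Λ₁(A) Λ₂(A))^{-1/2}`. -/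
def kappa {d : ℕ} {A : Matrix (Fin d) (Fin d) ℝ} (hA : A.IsHermitian) : ℝ :=
  (Lambda1 hA * Lambda2 hA) ^ (-(1 : ℝ) / 2)

/-- `near m u v` means `|u - v| ≤ m` for indices `u v`. -/
abbrev near (m : ℕ) {n : ℕ} (u v : Fin n) : Prop :=
  (u : ℕ) ≤ (v : ℕ) + m ∧ (v : ℕ) ≤ (u : ℕ) + m

/-- `m`-dependence of the sequence `ξ₁, …, ξₙ`: for every `i`, `{ξ₁, …, ξᵢ}` is independent of
`{ξ_{i+m+1}, …, ξₙ}` (written with `0`-based indices). -/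
def MDependent {n : ℕ} {Ω E : Type*} [MeasurableSpace Ω] [MeasurableSpace E]
    (m : ℕ) (ξ : Fin n → Ω → E) (μ : Measure Ω) : Prop :=
  ∀ i : ℕ, IndepFun (fun ω (j : {j : Fin n // (j : ℕ) < i}) => ξ j.1 ω)
    (fun ω (j : {j : Fin n // i + m ≤ (j : ℕ)}) => ξ j.1 ω) μ

/-- `W^{(uv)} = W - ∑_{r ∈ A_{uv}} ξ_r`, the sum of the `ξ_r` with `r` away from both `u`
and `v`. -/
def Wuv {d n : ℕ} {Ω : Type} (m : ℕ) (ξ : Fin n → Ω → EuclideanSpace ℝ (Fin d))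
    (u v : Fin n) (ω : Ω) : EuclideanSpace ℝ (Fin d) :=
  ∑ r ∈ Finset.univ.filter (fun r => ¬(near m u r ∨ near m v r)), ξ r ω

private lemma sum_coord {d : ℕ} {α : Type*} (f : α → EuclideanSpace ℝ (Fin d))
    (S : Finset α) (j : Fin d) : (∑ i ∈ S, f i) j = ∑ i ∈ S, f i j := by
  induction S using Finset.cons_induction with
  | empty => rfl
  | cons a s ha ih => rw [Finset.sum_cons, Finset.sum_cons, ← ih]; rfl

private lemma inner_expand {d : ℕ} (x y : EuclideanSpace ℝ (Fin d)) :
    ⟪x, y⟫ = ∑ j, x j * y j := by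
  simp [PiLp.inner_apply, RCLike.inner_apply, conj_trivial, mul_comm]

private lemma normsq_expand {d : ℕ} (x : EuclideanSpace ℝ (Fin d)) :
    ‖x‖ ^ 2 = ∑ j, x j ^ 2 := by
  rw [EuclideanSpace.norm_sq_eq]
  simp [Real.norm_eq_abs, sq_abs]

private lemma coord_le_norm {d : ℕ} (x : EuclideanSpace ℝ (Fin d)) (j : Fin d) :
    |x j| ≤ ‖x‖ := by
  have h1 : x j ^ 2 ≤ ∑ i, x i ^ 2 :=
    Finset.single_le_sum (fun i _ => sq_nonneg (x i)) (Finset.mem_univ j)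
  rw [← normsq_expand] at h1
  calc |x j| = Real.sqrt (x j ^ 2) := (Real.sqrt_sq_eq_abs _).symm
    _ ≤ Real.sqrt (‖x‖ ^ 2) := Real.sqrt_le_sqrt h1
    _ = ‖x‖ := Real.sqrt_sq (norm_nonneg x)

private lemma sum_filter_subtype {n : ℕ} {E : Type*} [AddCommMonoid E] {P : Fin n → Prop}
    [DecidablePred P] (S : Finset (Fin n)) (hS : ∀ s ∈ S, P s) (f : Fin n → E) :
    ∑ j ∈ Finset.univ.filter (fun j : {j : Fin n // P j} => j.1 ∈ S), f j.1 = ∑ s ∈ S, f s := by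
  apply Finset.sum_bij (fun j _ => j.1)
  · intro aa ha; simpa using (Finset.mem_filter.mp ha).2
  · intro aa _ b _ h; exact Subtype.ext h
  · intro b hb; exact ⟨⟨b, hS b hb⟩, by simp [hb], rfl⟩
  · intro aa _; rfl

private lemma indep_sums {d n m : ℕ} {Ω : Type} [MeasurableSpace Ω] {μ : Measure Ω}
    {ξ : Fin n → Ω → EuclideanSpace ℝ (Fin d)} (hdep : MDependent m ξ μ) (i : ℕ)
    (S T : Finset (Fin n)) (hS : ∀ s ∈ S, (s : ℕ) < i) (hT : ∀ t ∈ T, i + m ≤ (t : ℕ)) :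
    IndepFun (fun ω => ∑ s ∈ S, ξ s ω) (fun ω => ∑ t ∈ T, ξ t ω) μ := by
  have h := (hdep i).comp
    (φ := fun h : ({j : Fin n // (j : ℕ) < i} → EuclideanSpace ℝ (Fin d)) =>
      ∑ j ∈ Finset.univ.filter (fun j : {j : Fin n // (j : ℕ) < i} => j.1 ∈ S), h j)
    (ψ := fun h : ({j : Fin n // i + m ≤ (j : ℕ)} → EuclideanSpace ℝ (Fin d)) =>
      ∑ j ∈ Finset.univ.filter (fun j : {j : Fin n // i + m ≤ (j : ℕ)} => j.1 ∈ T), h j)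
    (Finset.measurable_sum _ fun j _ => measurable_pi_apply j)
    (Finset.measurable_sum _ fun j _ => measurable_pi_apply j)
  have e1 : (fun ω => ∑ s ∈ S, ξ s ω) =
      (fun h : ({j : Fin n // (j : ℕ) < i} → EuclideanSpace ℝ (Fin d)) =>
        ∑ j ∈ Finset.univ.filter (fun j : {j : Fin n // (j : ℕ) < i} => j.1 ∈ S), h j) ∘
      (fun ω (j : {j : Fin n // (j : ℕ) < i}) => ξ j.1 ω) := by
    funext ω; exact (sum_filter_subtype S hS fun s => ξ s ω).symm
  have e2 : (fun ω => ∑ t ∈ T, ξ t ω) =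
      (fun h : ({j : Fin n // i + m ≤ (j : ℕ)} → EuclideanSpace ℝ (Fin d)) =>
        ∑ j ∈ Finset.univ.filter (fun j : {j : Fin n // i + m ≤ (j : ℕ)} => j.1 ∈ T), h j) ∘
      (fun ω (j : {j : Fin n // i + m ≤ (j : ℕ)}) => ξ j.1 ω) := by
    funext ω; exact (sum_filter_subtype T hT fun s => ξ s ω).symm
  rw [e1, e2]; exact h

private lemma card_le_interval {n : ℕ} (c k : ℕ) (S : Finset (Fin n))
    (h : ∀ s ∈ S, c ≤ (s : ℕ) ∧ (s : ℕ) < c + k) : S.card ≤ k := by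
  have := Finset.card_le_card_of_injOn (f := fun s : Fin n => (s : ℕ) - c)
    (t := Finset.range k)
    (fun s hs => Finset.mem_range.mpr (by have := h s hs; simp only []; omega))
    (fun s hs t ht hst => by
      have h1 := h s hs; have h2 := h t ht
      simp only [] at hst
      exact Fin.ext (by omega))
  simpa using this

private lemma sq_add_add_le (x y z : ℝ) : (x + y + z) ^ 2 ≤ 3 * x ^ 2 + 3 * y ^ 2 + 3 * z ^ 2 := by
  nlinarith [sq_nonneg (x - y), sq_nonneg (x - z), sq_nonneg (y - z)]

private lemma pow_ineq2' (y δ : ℝ) (hy : 0 ≤ y) (hδ : 0 < δ) : y ^ 2 * δ ^ 4 ≤ δ ^ 6 + y ^ 6 := by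
  nlinarith [sq_nonneg (δ * (y ^ 2 - δ ^ 2)), sq_nonneg (y ^ 3 - y * δ ^ 2), sq_nonneg (y ^ 2 * δ)]

private lemma pow_ineq2 (y δ : ℝ) (hy : 0 ≤ y) (hδ : 0 < δ) : y ^ 2 ≤ δ ^ 2 + y ^ 6 / δ ^ 4 := by
  have h := pow_ineq2' y δ hy hδ
  have h4 : (0:ℝ) < δ ^ 4 := by positivity
  have key : y ^ 2 - δ ^ 2 ≤ y ^ 6 / δ ^ 4 := by
    rw [le_div_iff₀ h4]; nlinarith [h]
  linarith

private lemma pow_ineq4' (y δ : ℝ) (hy : 0 ≤ y) (hδ : 0 < δ) : y ^ 4 * δ ^ 2 ≤ δ ^ 6 + y ^ 6 := by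
  nlinarith [sq_nonneg (δ * (y ^ 2 - δ ^ 2)), sq_nonneg (y ^ 3 - y * δ ^ 2), sq_nonneg (y * δ ^ 2)]

private lemma pow_ineq4 (y δ : ℝ) (hy : 0 ≤ y) (hδ : 0 < δ) : y ^ 4 ≤ δ ^ 4 + y ^ 6 / δ ^ 2 := by
  have h := pow_ineq4' y δ hy hδ
  have h2 : (0:ℝ) < δ ^ 2 := by positivity
  have key : y ^ 4 - δ ^ 4 ≤ y ^ 6 / δ ^ 2 := by
    rw [le_div_iff₀ h2]; nlinarith [h]
  linarith

private lemma one_add_pow6 (y : ℝ) (hy : 0 ≤ y) : (1 + y) ^ 6 ≤ 64 * (1 + y ^ 6) := by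
  have hk : ∀ k : ℕ, k ≤ 6 → y ^ k ≤ 1 + y ^ 6 := by
    intro k hk
    rcases le_total y 1 with h | h
    · have : y ^ k ≤ 1 := pow_le_one₀ hy h
      nlinarith [pow_nonneg hy 6]
    · have : y ^ k ≤ y ^ 6 := pow_le_pow_right₀ h hk
      linarith
  have h1 := hk 1 (by norm_num); have h2 := hk 2 (by norm_num)
  have h3 := hk 3 (by norm_num); have h4 := hk 4 (by norm_num)
  have h5 := hk 5 (by norm_num); have h6 := hk 6 (by norm_num)
  nlinarith [h1, h2, h3, h4, h5, h6]


set_option maxHeartbeats 3200000 in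
/-- first part of Lemma `portnoy2`: second-moment bound for
`ξ_r · W^{(uv)}` for an `m`-dependent sequence. -/
theorem mdep_second_moment_bound :
    ∃ C : ℝ, 0 < C ∧
      ∀ (d n m : ℕ) (Ω : Type) [MeasurableSpace Ω] (μ : Measure Ω),
        IsProbabilityMeasure μ → m < n →
        ∀ (ξ : Fin n → Ω → EuclideanSpace ℝ (Fin d)) (δ : ℝ), 0 < δ →
          (∀ i, Measurable (ξ i)) →
          MDependent m ξ μ →
          (∀ i, ∫ ω, ξ i ω ∂μ = 0) →
          covMatrix μ (fun ω => ∑ i, ξ i ω) = 1 →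
          (∀ i, Integrable (fun ω => ‖ξ i ω‖ ^ 6) μ) →
          (∀ i, ∫ ω, ‖ξ i ω‖ ^ 6 ∂μ ≤ δ ^ 6) →
          ∀ u v r : Fin n, near m u v → (near m u r ∨ near m v r) →
            ∫ ω, ⟪ξ r ω, Wuv m ξ u v ω⟫ ^ 2 ∂μ ≤
              C * ((∫ ω, ‖ξ r ω‖ ^ 2 ∂μ) + ((max m 1 : ℕ) : ℝ) ^ 2 * δ ^ 4) := by
  refine ⟨1000, by norm_num, ?_⟩
  intro d n m Ω _ μ hprob hmn ξ δ hδ hmeas hdep hmean hcov hint6 hmom u v r huv hnear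
  obtain ⟨huv1, huv2⟩ := huv
  have hnr : ((u : ℕ) ≤ (r : ℕ) + m ∧ (r : ℕ) ≤ (u : ℕ) + m) ∨
      ((v : ℕ) ≤ (r : ℕ) + m ∧ (r : ℕ) ≤ (v : ℕ) + m) := hnear
  set a : ℕ := min (min (u : ℕ) (v : ℕ)) (r : ℕ) with ha
  set b : ℕ := max (max (u : ℕ) (v : ℕ)) (r : ℕ) with hb
  -- basic measurability
  have hsum_meas : ∀ S : Finset (Fin n), Measurable (fun ω => ∑ s ∈ S, ξ s ω) :=
    fun S => Finset.measurable_sum S (fun s _ => hmeas s)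
  set g : Ω → ℝ := fun ω => ∑ i, ‖ξ i ω‖ with hgdef
  have hgmeas : Measurable g := Finset.measurable_sum _ (fun i _ => (hmeas i).norm)
  have hgnn : ∀ ω, 0 ≤ g ω := fun ω => Finset.sum_nonneg (fun i _ => norm_nonneg _)
  have hSg : ∀ (S : Finset (Fin n)) (ω : Ω), ‖∑ s ∈ S, ξ s ω‖ ≤ g ω := fun S ω =>
    le_trans (norm_sum_le _ _)
      (Finset.sum_le_sum_of_subset_of_nonneg (Finset.subset_univ S) (fun i _ _ => norm_nonneg _))
  have hξg : ∀ (i : Fin n) (ω : Ω), ‖ξ i ω‖ ≤ g ω := fun i ω =>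
    Finset.single_le_sum (f := fun i => ‖ξ i ω‖) (fun i _ => norm_nonneg _) (Finset.mem_univ i)
  have hgpow : ∀ (ω : Ω) (k : ℕ), k ≤ 6 → g ω ^ k ≤ (1 + g ω) ^ 6 := by
    intro ω k hk
    calc g ω ^ k ≤ (1 + g ω) ^ k := by
          apply pow_le_pow_left₀ (hgnn ω); linarith [hgnn ω]
      _ ≤ (1 + g ω) ^ 6 := by
          apply pow_le_pow_right₀ (by linarith [hgnn ω]) hk
  -- the master dominating function is integrable
  have hg6 : Integrable (fun ω => (1 + g ω) ^ 6) μ := by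
    have hnpos : (0:ℝ) < (n:ℝ) := by
      have : 0 < n := lt_of_le_of_lt (Nat.zero_le m) hmn
      exact_mod_cast this
    have hbound : ∀ ω, ‖(1 + g ω) ^ 6‖ ≤
        64 * (1 + (n:ℝ) ^ 5 * ∑ i, ‖ξ i ω‖ ^ 6) := by
      intro ω
      rw [Real.norm_eq_abs, abs_of_nonneg (by positivity)]
      have h6 : g ω ^ 6 ≤ (n:ℝ) ^ 5 * ∑ i, ‖ξ i ω‖ ^ 6 := by
        have hch := pow_sum_div_card_le_sum_pow (s := (Finset.univ : Finset (Fin n)))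
          (f := fun i => ‖ξ i ω‖) (fun i _ => norm_nonneg _) 5
        have hcard : ((Finset.univ : Finset (Fin n)).card : ℝ) = (n:ℝ) := by simp
        rw [div_le_iff₀ (by rw [hcard]; positivity)] at hch
        rw [hgdef]
        calc (∑ i, ‖ξ i ω‖) ^ 6 ≤ (∑ i, ‖ξ i ω‖ ^ 6) * ((Finset.univ : Finset (Fin n)).card:ℝ) ^ 5 := hch
          _ = (n:ℝ) ^ 5 * ∑ i, ‖ξ i ω‖ ^ 6 := by rw [hcard, mul_comm]
      calc (1 + g ω) ^ 6 ≤ 64 * (1 + g ω ^ 6) := one_add_pow6 _ (hgnn ω)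
        _ ≤ 64 * (1 + (n:ℝ) ^ 5 * ∑ i, ‖ξ i ω‖ ^ 6) := by linarith
    refine Integrable.mono' ?_ ?_ (Filter.Eventually.of_forall hbound)
    · exact (((integrable_const (1:ℝ)).add
        ((integrable_finset_sum _ (fun i _ => hint6 i)).const_mul _)).const_mul 64)
    · exact ((measurable_const.add hgmeas).pow_const 6).aestronglyMeasurable
  have hIntD : ∀ (c : ℝ) (f : Ω → ℝ), Measurable f → (∀ ω, |f ω| ≤ c * (1 + g ω) ^ 6) →
      Integrable f μ := by
    intro c f hf hfb
    exact Integrable.mono' (hg6.const_mul c) hf.aestronglyMeasurable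
      (Filter.Eventually.of_forall (fun ω => by simpa using hfb ω))
  -- moment bounds
  have hInt2 : ∀ i : Fin n, Integrable (fun ω => ‖ξ i ω‖ ^ 2) μ := by
    intro i
    refine hIntD 1 _ ((hmeas i).norm.pow_const 2) (fun ω => ?_)
    rw [one_mul, abs_of_nonneg (by positivity)]
    exact le_trans (pow_le_pow_left₀ (norm_nonneg _) (hξg i ω) 2) (hgpow ω 2 (by norm_num))
  have hInt4 : ∀ i : Fin n, Integrable (fun ω => ‖ξ i ω‖ ^ 4) μ := by
    intro i
    refine hIntD 1 _ ((hmeas i).norm.pow_const 4) (fun ω => ?_)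
    rw [one_mul, abs_of_nonneg (by positivity)]
    exact le_trans (pow_le_pow_left₀ (norm_nonneg _) (hξg i ω) 4) (hgpow ω 4 (by norm_num))
  have hIntVec : ∀ i : Fin n, Integrable (ξ i) μ := by
    intro i
    refine Integrable.mono' (hg6.const_mul 1) (hmeas i).aestronglyMeasurable
      (Filter.Eventually.of_forall (fun ω => ?_))
    rw [one_mul]
    exact le_trans (hξg i ω) (by simpa using hgpow ω 1 (by norm_num))
  have hIntSumVec : ∀ S : Finset (Fin n), Integrable (fun ω => ∑ s ∈ S, ξ s ω) μ :=
    fun S => integrable_finset_sum _ (fun s _ => hIntVec s)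
  have hmom2 : ∀ i : Fin n, ∫ ω, ‖ξ i ω‖ ^ 2 ∂μ ≤ 2 * δ ^ 2 := by
    intro i
    have hI : Integrable (fun ω => δ ^ 2 + ‖ξ i ω‖ ^ 6 / δ ^ 4) μ :=
      (integrable_const _).add ((hint6 i).div_const _)
    calc ∫ ω, ‖ξ i ω‖ ^ 2 ∂μ ≤ ∫ ω, (δ ^ 2 + ‖ξ i ω‖ ^ 6 / δ ^ 4) ∂μ :=
          integral_mono (hInt2 i) hI (fun ω => pow_ineq2 _ _ (norm_nonneg _) hδ)
      _ = δ ^ 2 + (∫ ω, ‖ξ i ω‖ ^ 6 ∂μ) / δ ^ 4 := by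
          rw [integral_add (integrable_const _) ((hint6 i).div_const _), integral_const,
            integral_div]
          simp
      _ ≤ δ ^ 2 + δ ^ 6 / δ ^ 4 := by
          have := hmom i
          gcongr
      _ = 2 * δ ^ 2 := by field_simp; ring
  have hmom4 : ∀ i : Fin n, ∫ ω, ‖ξ i ω‖ ^ 4 ∂μ ≤ 2 * δ ^ 4 := by
    intro i
    have hI : Integrable (fun ω => δ ^ 4 + ‖ξ i ω‖ ^ 6 / δ ^ 2) μ :=
      (integrable_const _).add ((hint6 i).div_const _)
    calc ∫ ω, ‖ξ i ω‖ ^ 4 ∂μ ≤ ∫ ω, (δ ^ 4 + ‖ξ i ω‖ ^ 6 / δ ^ 2) ∂μ :=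
          integral_mono (hInt4 i) hI (fun ω => pow_ineq4 _ _ (norm_nonneg _) hδ)
      _ = δ ^ 4 + (∫ ω, ‖ξ i ω‖ ^ 6 ∂μ) / δ ^ 2 := by
          rw [integral_add (integrable_const _) ((hint6 i).div_const _), integral_const,
            integral_div]
          simp
      _ ≤ δ ^ 4 + δ ^ 6 / δ ^ 2 := by
          have := hmom i
          gcongr
      _ = 2 * δ ^ 4 := by field_simp; ring
  have hmixInt : ∀ i j : Fin n, Integrable (fun ω => ‖ξ i ω‖ ^ 2 * ‖ξ j ω‖ ^ 2) μ := by
    intro i j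
    refine hIntD 1 _ (((hmeas i).norm.pow_const 2).mul ((hmeas j).norm.pow_const 2))
      (fun ω => ?_)
    rw [one_mul, abs_of_nonneg (by positivity)]
    calc ‖ξ i ω‖ ^ 2 * ‖ξ j ω‖ ^ 2 ≤ g ω ^ 2 * g ω ^ 2 := by
          apply mul_le_mul (pow_le_pow_left₀ (norm_nonneg _) (hξg i ω) 2)
            (pow_le_pow_left₀ (norm_nonneg _) (hξg j ω) 2) (by positivity) (by positivity)
      _ = g ω ^ 4 := by ring
      _ ≤ (1 + g ω) ^ 6 := hgpow ω 4 (by norm_num)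
  have hmix : ∀ i j : Fin n, ∫ ω, ‖ξ i ω‖ ^ 2 * ‖ξ j ω‖ ^ 2 ∂μ ≤ 2 * δ ^ 4 := by
    intro i j
    calc ∫ ω, ‖ξ i ω‖ ^ 2 * ‖ξ j ω‖ ^ 2 ∂μ
        ≤ ∫ ω, (‖ξ i ω‖ ^ 4 + ‖ξ j ω‖ ^ 4) / 2 ∂μ := by
          apply integral_mono (hmixInt i j) (((hInt4 i).add (hInt4 j)).div_const 2)
          intro ω
          simp only [Pi.add_apply]
          nlinarith [sq_nonneg (‖ξ i ω‖ ^ 2 - ‖ξ j ω‖ ^ 2)]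
      _ = ((∫ ω, ‖ξ i ω‖ ^ 4 ∂μ) + ∫ ω, ‖ξ j ω‖ ^ 4 ∂μ) / 2 := by
          rw [integral_div, integral_add (hInt4 i) (hInt4 j)]
      _ ≤ ((2 * δ ^ 4) + (2 * δ ^ 4)) / 2 := by
          have h1 := hmom4 i; have h2 := hmom4 j; gcongr
      _ = 2 * δ ^ 4 := by ring
  -- coordinates
  have hcoordmeas : ∀ (i : Fin n) (j : Fin d), Measurable fun ω => ξ i ω j :=
    fun i j => (measurable_pi_apply j).comp ((WithLp.measurable_ofLp 2 _).comp (hmeas i))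
  have hIntC : ∀ (i : Fin n) (j : Fin d), Integrable (fun ω => ξ i ω j) μ := by
    intro i j
    refine hIntD 1 _ (hcoordmeas i j) (fun ω => ?_)
    rw [one_mul]
    exact le_trans (coord_le_norm _ j) (le_trans (hξg i ω)
      (by simpa using hgpow ω 1 (by norm_num)))
  have hmean0 : ∀ (i : Fin n) (j : Fin d), ∫ ω, ξ i ω j ∂μ = 0 := by
    intro i j
    have h := (EuclideanSpace.proj j (𝕜 := ℝ)).integral_comp_comm (hIntVec i)
    simp only [EuclideanSpace.proj, PiLp.proj_apply] at h
    rw [h, hmean i]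
    rfl
  -- covariance identity in coordinates
  have hIntWjk : ∀ j k : Fin d,
      Integrable (fun ω => (∑ i, ξ i ω j) * (∑ i, ξ i ω k)) μ := by
    intro j k
    have hWb : ∀ (jj : Fin d) (ω : Ω), |∑ i, ξ i ω jj| ≤ g ω := by
      intro jj ω
      rw [← sum_coord]
      exact le_trans (coord_le_norm _ jj) (hSg Finset.univ ω)
    refine hIntD 1 _ ((Finset.measurable_sum _ fun i _ => hcoordmeas i j).mul
      (Finset.measurable_sum _ fun i _ => hcoordmeas i k)) (fun ω => ?_)
    rw [one_mul, abs_mul]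
    calc |∑ i, ξ i ω j| * |∑ i, ξ i ω k| ≤ g ω * g ω :=
          mul_le_mul (hWb j ω) (hWb k ω) (abs_nonneg _) (hgnn ω)
      _ = g ω ^ 2 := by ring
      _ ≤ (1 + g ω) ^ 6 := hgpow ω 2 (by norm_num)
  have hWcov : ∀ j k : Fin d,
      ∫ ω, (∑ i, ξ i ω j) * (∑ i, ξ i ω k) ∂μ = if j = k then 1 else 0 := by
    intro j k
    have h := congrFun (congrFun hcov j) k
    simp only [covMatrix, Matrix.of_apply] at h
    have e : ∀ jj : Fin d, (fun ω => (∑ i, ξ i ω) jj) = fun ω => ∑ i, ξ i ω jj := by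
      intro jj; funext ω; exact sum_coord _ _ jj
    rw [show (fun ω => (∑ i, ξ i ω) j * (∑ i, ξ i ω) k)
        = fun ω => (∑ i, ξ i ω j) * (∑ i, ξ i ω k) by
          funext ω; rw [sum_coord, sum_coord]] at h
    rw [show (∫ ω, (∑ i, ξ i ω) j ∂μ) = ∫ ω, ∑ i, ξ i ω j ∂μ by
      congr 1; funext ω; rw [sum_coord]] at h
    rw [show (∫ ω, (∑ i, ξ i ω) k ∂μ) = ∫ ω, ∑ i, ξ i ω k ∂μ by
      congr 1; funext ω; rw [sum_coord]] at h
    rw [integral_finset_sum _ (fun i _ => hIntC i j)] at h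
    rw [integral_finset_sum _ (fun i _ => hIntC i k)] at h
    simp only [hmean0, Finset.sum_const_zero, mul_zero, zero_mul, sub_zero] at h
    rw [h, Matrix.one_apply]
  -- E ⟪x, W⟫² = ‖x‖²
  have hW2 : ∀ x : EuclideanSpace ℝ (Fin d),
      ∫ ω, ⟪x, ∑ i, ξ i ω⟫ ^ 2 ∂μ = ‖x‖ ^ 2 := by
    intro x
    have hexp : (fun ω => ⟪x, ∑ i, ξ i ω⟫ ^ 2)
        = fun ω => ∑ j, ∑ k, (x j * x k) * ((∑ i, ξ i ω j) * (∑ i, ξ i ω k)) := by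
      funext ω
      rw [inner_expand, sq, Finset.sum_mul_sum]
      refine Finset.sum_congr rfl (fun j _ => Finset.sum_congr rfl (fun k _ => ?_))
      rw [sum_coord, sum_coord]; ring
    rw [hexp]
    rw [integral_finset_sum _ (fun j _ =>
      integrable_finset_sum _ (fun k _ => (hIntWjk j k).const_mul _))]
    have : ∀ j : Fin d, ∫ ω, ∑ k, (x j * x k) * ((∑ i, ξ i ω j) * (∑ i, ξ i ω k)) ∂μ
        = ∑ k, (x j * x k) * (if j = k then 1 else 0) := by
      intro j
      rw [integral_finset_sum _ (fun k _ => (hIntWjk j k).const_mul _)]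
      refine Finset.sum_congr rfl (fun k _ => ?_)
      rw [integral_const_mul, hWcov j k]
    rw [Finset.sum_congr rfl (fun j _ => this j)]
    rw [normsq_expand]
    refine Finset.sum_congr rfl (fun j _ => ?_)
    simp [mul_ite, Finset.sum_ite_eq, sq]
  -- generic variance bound for block sums
  have hVar : ∀ S S1 S2 : Finset (Fin n),
      (∀ ω, (∑ i, ξ i ω) = (∑ s ∈ S, ξ s ω) + ((∑ s ∈ S1, ξ s ω) + (∑ s ∈ S2, ξ s ω))) →
      ((S1.card : ℝ) ≤ (m : ℝ)) →
      IndepFun (fun ω => ∑ s ∈ S, ξ s ω) (fun ω => ∑ s ∈ S2, ξ s ω) μ →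
      ∀ x : EuclideanSpace ℝ (Fin d),
        ∫ ω, ⟪x, ∑ s ∈ S, ξ s ω⟫ ^ 2 ∂μ ≤ (2 + 8 * (m:ℝ) ^ 2 * δ ^ 2) * ‖x‖ ^ 2 := by
    intro S S1 S2 hsplit hcard hind x
    set A : Ω → ℝ := fun ω => ⟪x, ∑ s ∈ S, ξ s ω⟫ with hA
    set B1 : Ω → ℝ := fun ω => ⟪x, ∑ s ∈ S1, ξ s ω⟫ with hB1
    set B2 : Ω → ℝ := fun ω => ⟪x, ∑ s ∈ S2, ξ s ω⟫ with hB2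
    have hAm : Measurable A := Measurable.inner measurable_const (hsum_meas S)
    have hB1m : Measurable B1 := Measurable.inner measurable_const (hsum_meas S1)
    have hB2m : Measurable B2 := Measurable.inner measurable_const (hsum_meas S2)
    have hAb : ∀ ω, |A ω| ≤ ‖x‖ * g ω := fun ω =>
      le_trans (abs_real_inner_le_norm _ _)
        (mul_le_mul_of_nonneg_left (hSg S ω) (norm_nonneg x))
    have hB1b : ∀ ω, |B1 ω| ≤ ‖x‖ * g ω := fun ω =>
      le_trans (abs_real_inner_le_norm _ _)
        (mul_le_mul_of_nonneg_left (hSg S1 ω) (norm_nonneg x))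
    have hB2b : ∀ ω, |B2 ω| ≤ ‖x‖ * g ω := fun ω =>
      le_trans (abs_real_inner_le_norm _ _)
        (mul_le_mul_of_nonneg_left (hSg S2 ω) (norm_nonneg x))
    have prodbound : ∀ (F G : Ω → ℝ), (∀ ω, |F ω| ≤ ‖x‖ * g ω) → (∀ ω, |G ω| ≤ ‖x‖ * g ω) →
        ∀ ω, |F ω * G ω| ≤ ‖x‖ ^ 2 * (1 + g ω) ^ 6 := by
      intro F G hF hG ω
      rw [abs_mul]
      calc |F ω| * |G ω| ≤ (‖x‖ * g ω) * (‖x‖ * g ω) :=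
            mul_le_mul (hF ω) (hG ω) (abs_nonneg _) (by positivity)
        _ = ‖x‖ ^ 2 * g ω ^ 2 := by ring
        _ ≤ ‖x‖ ^ 2 * (1 + g ω) ^ 6 := by
            have := hgpow ω 2 (by norm_num); gcongr
    have hIA2 : Integrable (fun ω => A ω ^ 2) μ :=
      hIntD (‖x‖ ^ 2) _ (hAm.pow_const 2)
        (fun ω => by rw [show A ω ^ 2 = A ω * A ω by ring]
                     exact prodbound A A hAb hAb ω)
    have hIB1sq : Integrable (fun ω => B1 ω ^ 2) μ :=
      hIntD (‖x‖ ^ 2) _ (hB1m.pow_const 2)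
        (fun ω => by rw [show B1 ω ^ 2 = B1 ω * B1 ω by ring]
                     exact prodbound B1 B1 hB1b hB1b ω)
    have hIAB1 : Integrable (fun ω => A ω * B1 ω) μ :=
      hIntD (‖x‖ ^ 2) _ (hAm.mul hB1m) (prodbound A B1 hAb hB1b)
    have hIAB2 : Integrable (fun ω => A ω * B2 ω) μ :=
      hIntD (‖x‖ ^ 2) _ (hAm.mul hB2m) (prodbound A B2 hAb hB2b)
    have hID2 : Integrable (fun ω => (B1 ω + B2 ω) ^ 2) μ := by
      refine hIntD (4 * ‖x‖ ^ 2) _ ((hB1m.add hB2m).pow_const 2) (fun ω => ?_)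
      rw [abs_of_nonneg (sq_nonneg _)]
      have h1 := hB1b ω; have h2 := hB2b ω
      have h3 : |B1 ω + B2 ω| ≤ 2 * (‖x‖ * g ω) :=
        le_trans (abs_add_le _ _) (by linarith)
      calc (B1 ω + B2 ω) ^ 2 = |B1 ω + B2 ω| ^ 2 := (sq_abs _).symm
        _ ≤ (2 * (‖x‖ * g ω)) ^ 2 := by
            apply pow_le_pow_left₀ (abs_nonneg _) h3
        _ = 4 * ‖x‖ ^ 2 * g ω ^ 2 := by ring
        _ ≤ 4 * ‖x‖ ^ 2 * (1 + g ω) ^ 6 := by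
            have := hgpow ω 2 (by norm_num); gcongr
        _ = 4 * ‖x‖ ^ 2 * (1 + g ω) ^ 6 := rfl
    -- total variance identity
    have hiden : ∫ ω, (A ω + (B1 ω + B2 ω)) ^ 2 ∂μ = ‖x‖ ^ 2 := by
      have hfun : (fun ω => (A ω + (B1 ω + B2 ω)) ^ 2)
          = fun ω => ⟪x, ∑ i, ξ i ω⟫ ^ 2 := by
        funext ω
        rw [hsplit ω]
        simp only [hA, hB1, hB2, inner_add_right]
      rw [hfun, hW2 x]
    have hexpand2 : ∫ ω, (A ω + (B1 ω + B2 ω)) ^ 2 ∂μ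
        = (∫ ω, A ω ^ 2 ∂μ) + 2 * (∫ ω, A ω * B1 ω ∂μ) + 2 * (∫ ω, A ω * B2 ω ∂μ)
          + ∫ ω, (B1 ω + B2 ω) ^ 2 ∂μ := by
      have hfun : (fun ω => (A ω + (B1 ω + B2 ω)) ^ 2)
          = fun ω => A ω ^ 2 + (2 * (A ω * B1 ω) + (2 * (A ω * B2 ω) + (B1 ω + B2 ω) ^ 2)) := by
        funext ω; ring
      have e3 : ∫ ω, (2 * (A ω * B2 ω) + (B1 ω + B2 ω) ^ 2) ∂μ
          = 2 * (∫ ω, A ω * B2 ω ∂μ) + ∫ ω, (B1 ω + B2 ω) ^ 2 ∂μ := by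
        rw [integral_add (f := fun ω => 2 * (A ω * B2 ω))
          (g := fun ω => (B1 ω + B2 ω) ^ 2) (hIAB2.const_mul 2) hID2,
          integral_const_mul]
      have e2 : ∫ ω, (2 * (A ω * B1 ω) + (2 * (A ω * B2 ω) + (B1 ω + B2 ω) ^ 2)) ∂μ
          = 2 * (∫ ω, A ω * B1 ω ∂μ)
            + (2 * (∫ ω, A ω * B2 ω ∂μ) + ∫ ω, (B1 ω + B2 ω) ^ 2 ∂μ) := by
        rw [integral_add (f := fun ω => 2 * (A ω * B1 ω))
          (g := fun ω => 2 * (A ω * B2 ω) + (B1 ω + B2 ω) ^ 2) (hIAB1.const_mul 2)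
          ((hIAB2.const_mul 2).add hID2), integral_const_mul, e3]
      have e1 : ∫ ω, (A ω ^ 2 + (2 * (A ω * B1 ω) + (2 * (A ω * B2 ω) + (B1 ω + B2 ω) ^ 2))) ∂μ
          = (∫ ω, A ω ^ 2 ∂μ)
            + (2 * (∫ ω, A ω * B1 ω ∂μ)
              + (2 * (∫ ω, A ω * B2 ω ∂μ) + ∫ ω, (B1 ω + B2 ω) ^ 2 ∂μ)) := by
        rw [integral_add (f := fun ω => A ω ^ 2)
          (g := fun ω => 2 * (A ω * B1 ω) + (2 * (A ω * B2 ω) + (B1 ω + B2 ω) ^ 2)) hIA2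
          ((hIAB1.const_mul 2).add ((hIAB2.const_mul 2).add hID2)), e2]
      rw [hfun, e1]
      ring
    have hAB2 : ∫ ω, A ω * B2 ω ∂μ = 0 := by
      have hindA : IndepFun A B2 μ := by
        have := hind.comp (φ := fun y : EuclideanSpace ℝ (Fin d) => ⟪x, y⟫)
          (ψ := fun y : EuclideanSpace ℝ (Fin d) => ⟪x, y⟫)
          (Measurable.inner measurable_const measurable_id)
          (Measurable.inner measurable_const measurable_id)
        exact this
      rw [hindA.integral_fun_mul_eq_mul_integral hAm.aestronglyMeasurable hB2m.aestronglyMeasurable]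
      have hB2zero : ∫ ω, B2 ω ∂μ = 0 := by
        simp only [hB2]
        rw [integral_inner (hIntSumVec S2)]
        rw [integral_finset_sum _ (fun s _ => hIntVec s)]
        have : ∑ s ∈ S2, ∫ ω, ξ s ω ∂μ = 0 := by
          refine Finset.sum_eq_zero (fun s _ => hmean s)
        rw [this, inner_zero_right]
      rw [hB2zero, mul_zero]
    have hcross : -(2 * ∫ ω, A ω * B1 ω ∂μ)
        ≤ (1/2) * ∫ ω, A ω ^ 2 ∂μ + 2 * ∫ ω, B1 ω ^ 2 ∂μ := by
      have hpt : ∀ ω, -(2 * (A ω * B1 ω)) ≤ (1/2) * A ω ^ 2 + 2 * B1 ω ^ 2 := by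
        intro ω; nlinarith [sq_nonneg (A ω + 2 * B1 ω)]
      have hmono := integral_mono (f := fun ω => -(2 * (A ω * B1 ω)))
        (g := fun ω => (1/2) * A ω ^ 2 + 2 * B1 ω ^ 2) ((hIAB1.const_mul 2).neg)
        ((hIA2.const_mul (1/2)).add (hIB1sq.const_mul 2)) hpt
      have eL : ∫ ω, (-(2 * (A ω * B1 ω))) ∂μ = -(2 * ∫ ω, A ω * B1 ω ∂μ) := by
        rw [integral_neg (f := fun ω => 2 * (A ω * B1 ω)), integral_const_mul]
      have eR : ∫ ω, ((1/2) * A ω ^ 2 + 2 * B1 ω ^ 2) ∂μ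
          = (1/2) * ∫ ω, A ω ^ 2 ∂μ + 2 * ∫ ω, B1 ω ^ 2 ∂μ := by
        rw [integral_add (f := fun ω => (1/2) * A ω ^ 2) (g := fun ω => 2 * B1 ω ^ 2)
          (hIA2.const_mul (1/2)) (hIB1sq.const_mul 2), integral_const_mul, integral_const_mul]
      rw [eL, eR] at hmono
      linarith
    have hB1sq : ∫ ω, B1 ω ^ 2 ∂μ ≤ 2 * (m:ℝ) ^ 2 * δ ^ 2 * ‖x‖ ^ 2 := by
      have hptB : ∀ ω, B1 ω ^ 2 ≤ (S1.card : ℝ) * ∑ s ∈ S1, ⟪x, ξ s ω⟫ ^ 2 := by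
        intro ω
        simp only [hB1, inner_sum]
        exact sq_sum_le_card_mul_sum_sq
      have hIin : ∀ s : Fin n, Integrable (fun ω => ⟪x, ξ s ω⟫ ^ 2) μ := by
        intro s
        refine hIntD (‖x‖ ^ 2) _ ((Measurable.inner measurable_const (hmeas s)).pow_const 2)
          (fun ω => ?_)
        have hxb : ∀ ω, |⟪x, ξ s ω⟫| ≤ ‖x‖ * g ω := fun ω =>
          le_trans (abs_real_inner_le_norm _ _)
            (mul_le_mul_of_nonneg_left (hξg s ω) (norm_nonneg x))
        rw [show ⟪x, ξ s ω⟫ ^ 2 = ⟪x, ξ s ω⟫ * ⟪x, ξ s ω⟫ by ring]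
        exact prodbound _ _ hxb hxb ω
      have hpers : ∀ s : Fin n, ∫ ω, ⟪x, ξ s ω⟫ ^ 2 ∂μ ≤ (2 * δ ^ 2) * ‖x‖ ^ 2 := by
        intro s
        calc ∫ ω, ⟪x, ξ s ω⟫ ^ 2 ∂μ ≤ ∫ ω, ‖x‖ ^ 2 * ‖ξ s ω‖ ^ 2 ∂μ := by
              apply integral_mono (hIin s) ((hInt2 s).const_mul _)
              intro ω
              calc ⟪x, ξ s ω⟫ ^ 2 = |⟪x, ξ s ω⟫| ^ 2 := (sq_abs _).symm
                _ ≤ (‖x‖ * ‖ξ s ω‖) ^ 2 := by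
                    apply pow_le_pow_left₀ (abs_nonneg _) (abs_real_inner_le_norm _ _)
                _ = ‖x‖ ^ 2 * ‖ξ s ω‖ ^ 2 := by ring
          _ = ‖x‖ ^ 2 * ∫ ω, ‖ξ s ω‖ ^ 2 ∂μ := integral_const_mul _ _
          _ ≤ ‖x‖ ^ 2 * (2 * δ ^ 2) := by
              have := hmom2 s; gcongr
          _ = (2 * δ ^ 2) * ‖x‖ ^ 2 := by ring
      calc ∫ ω, B1 ω ^ 2 ∂μ ≤ ∫ ω, (S1.card : ℝ) * ∑ s ∈ S1, ⟪x, ξ s ω⟫ ^ 2 ∂μ := by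
            apply integral_mono hIB1sq ((integrable_finset_sum _ (fun s _ => hIin s)).const_mul _) hptB
        _ = (S1.card : ℝ) * ∑ s ∈ S1, ∫ ω, ⟪x, ξ s ω⟫ ^ 2 ∂μ := by
            rw [integral_const_mul, integral_finset_sum _ (fun s _ => hIin s)]
        _ ≤ (S1.card : ℝ) * ((S1.card : ℝ) * ((2 * δ ^ 2) * ‖x‖ ^ 2)) := by
            have hsum : ∑ s ∈ S1, ∫ ω, ⟪x, ξ s ω⟫ ^ 2 ∂μ
                ≤ (S1.card : ℝ) * ((2 * δ ^ 2) * ‖x‖ ^ 2) := by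
              calc ∑ s ∈ S1, ∫ ω, ⟪x, ξ s ω⟫ ^ 2 ∂μ
                  ≤ ∑ _s ∈ S1, (2 * δ ^ 2) * ‖x‖ ^ 2 :=
                    Finset.sum_le_sum (fun s _ => hpers s)
                _ = (S1.card : ℝ) * ((2 * δ ^ 2) * ‖x‖ ^ 2) := by
                    rw [Finset.sum_const, nsmul_eq_mul]
            exact mul_le_mul_of_nonneg_left hsum (Nat.cast_nonneg _)
        _ ≤ (m:ℝ) * ((m:ℝ) * ((2 * δ ^ 2) * ‖x‖ ^ 2)) := by
            have h0 : (0:ℝ) ≤ (2 * δ ^ 2) * ‖x‖ ^ 2 := by positivity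
            have h1 : (0:ℝ) ≤ (S1.card : ℝ) := Nat.cast_nonneg _
            apply mul_le_mul hcard (mul_le_mul hcard le_rfl h0 (by positivity)) (by positivity)
              (by positivity)
        _ = 2 * (m:ℝ) ^ 2 * δ ^ 2 * ‖x‖ ^ 2 := by ring
    have hD2nn : 0 ≤ ∫ ω, (B1 ω + B2 ω) ^ 2 ∂μ := integral_nonneg (fun ω => sq_nonneg _)
    -- combine
    have hxnn : (0:ℝ) ≤ ‖x‖ ^ 2 := sq_nonneg _
    nlinarith [hiden, hexpand2, hAB2, hcross, hB1sq, hD2nn]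
  -- key lemma: transfer variance bound through independence
  have hKey : ∀ (Y : Ω → EuclideanSpace ℝ (Fin d)) (β : ℝ), Measurable Y →
      (∀ ω, ‖Y ω‖ ≤ g ω) →
      (∀ x : EuclideanSpace ℝ (Fin d), ∫ ω, ⟪x, Y ω⟫ ^ 2 ∂μ ≤ β * ‖x‖ ^ 2) →
      IndepFun (ξ r) Y μ →
      ∫ ω, ⟪ξ r ω, Y ω⟫ ^ 2 ∂μ ≤ β * ∫ ω, ‖ξ r ω‖ ^ 2 ∂μ := by
    intro Y β hYm hYg hYvar hind
    have hYc : ∀ j : Fin d, Measurable fun ω => Y ω j :=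
      fun j => (measurable_pi_apply j).comp ((WithLp.measurable_ofLp 2 _).comp hYm)
    have hYcb : ∀ (j : Fin d) (ω : Ω), |Y ω j| ≤ g ω :=
      fun j ω => le_trans (coord_le_norm _ j) (hYg ω)
    have hξcb : ∀ (j : Fin d) (ω : Ω), |ξ r ω j| ≤ g ω :=
      fun j ω => le_trans (coord_le_norm _ j) (hξg r ω)
    have hIYjk : ∀ j k : Fin d, Integrable (fun ω => Y ω j * Y ω k) μ := by
      intro j k
      refine hIntD 1 _ ((hYc j).mul (hYc k)) (fun ω => ?_)
      rw [one_mul, abs_mul]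
      calc |Y ω j| * |Y ω k| ≤ g ω * g ω :=
            mul_le_mul (hYcb j ω) (hYcb k ω) (abs_nonneg _) (hgnn ω)
        _ = g ω ^ 2 := by ring
        _ ≤ (1 + g ω) ^ 6 := hgpow ω 2 (by norm_num)
    have hIrjk : ∀ j k : Fin d, Integrable (fun ω => ξ r ω j * ξ r ω k) μ := by
      intro j k
      refine hIntD 1 _ ((hcoordmeas r j).mul (hcoordmeas r k)) (fun ω => ?_)
      rw [one_mul, abs_mul]
      calc |ξ r ω j| * |ξ r ω k| ≤ g ω * g ω :=
            mul_le_mul (hξcb j ω) (hξcb k ω) (abs_nonneg _) (hgnn ω)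
        _ = g ω ^ 2 := by ring
        _ ≤ (1 + g ω) ^ 6 := hgpow ω 2 (by norm_num)
    have hexpand : ∀ (z : EuclideanSpace ℝ (Fin d)) (y : EuclideanSpace ℝ (Fin d)),
        ⟪z, y⟫ ^ 2 = ∑ j, ∑ k, (z j * z k) * (y j * y k) := by
      intro z y
      rw [inner_expand, sq, Finset.sum_mul_sum]
      exact Finset.sum_congr rfl (fun j _ => Finset.sum_congr rfl (fun k _ => by ring))
    set c : Fin d → Fin d → ℝ := fun j k => ∫ ω, Y ω j * Y ω k ∂μ with hc
    have hAz : ∀ z : EuclideanSpace ℝ (Fin d),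
        ∫ ω, ⟪z, Y ω⟫ ^ 2 ∂μ = ∑ j, ∑ k, (z j * z k) * c j k := by
      intro z
      rw [show (fun ω => ⟪z, Y ω⟫ ^ 2)
          = fun ω => ∑ j, ∑ k, (z j * z k) * (Y ω j * Y ω k) from
        funext (fun ω => hexpand z (Y ω))]
      rw [integral_finset_sum _ (fun j _ =>
        integrable_finset_sum _ (fun k _ => (hIYjk j k).const_mul _))]
      refine Finset.sum_congr rfl (fun j _ => ?_)
      rw [integral_finset_sum _ (fun k _ => (hIYjk j k).const_mul _)]
      exact Finset.sum_congr rfl (fun k _ => integral_const_mul _ _)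
    have hIprod : ∀ j k : Fin d,
        Integrable (fun ω => (ξ r ω j * ξ r ω k) * (Y ω j * Y ω k)) μ := by
      intro j k
      refine hIntD 1 _ (((hcoordmeas r j).mul (hcoordmeas r k)).mul
        ((hYc j).mul (hYc k))) (fun ω => ?_)
      rw [one_mul, abs_mul, abs_mul, abs_mul]
      calc |ξ r ω j| * |ξ r ω k| * (|Y ω j| * |Y ω k|) ≤ g ω * g ω * (g ω * g ω) := by
            apply mul_le_mul (mul_le_mul (hξcb j ω) (hξcb k ω) (abs_nonneg _) (hgnn ω))
              (mul_le_mul (hYcb j ω) (hYcb k ω) (abs_nonneg _) (hgnn ω))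
              (by positivity) (by positivity)
        _ = g ω ^ 4 := by ring
        _ ≤ (1 + g ω) ^ 6 := hgpow ω 4 (by norm_num)
    have step1 : ∫ ω, ⟪ξ r ω, Y ω⟫ ^ 2 ∂μ
        = ∑ j, ∑ k, (∫ ω, ξ r ω j * ξ r ω k ∂μ) * c j k := by
      rw [show (fun ω => ⟪ξ r ω, Y ω⟫ ^ 2)
          = fun ω => ∑ j, ∑ k, (ξ r ω j * ξ r ω k) * (Y ω j * Y ω k) from
        funext (fun ω => hexpand (ξ r ω) (Y ω))]
      rw [integral_finset_sum _ (fun j _ =>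
        integrable_finset_sum _ (fun k _ => hIprod j k))]
      refine Finset.sum_congr rfl (fun j _ => ?_)
      rw [integral_finset_sum _ (fun k _ => hIprod j k)]
      refine Finset.sum_congr rfl (fun k _ => ?_)
      have hindjk : IndepFun (fun ω => ξ r ω j * ξ r ω k) (fun ω => Y ω j * Y ω k) μ := by
        have hm : Measurable (fun y : EuclideanSpace ℝ (Fin d) => y j * y k) :=
          ((measurable_pi_apply j).comp (WithLp.measurable_ofLp 2 _)).mul
            ((measurable_pi_apply k).comp (WithLp.measurable_ofLp 2 _))
        have := hind.comp (φ := fun y : EuclideanSpace ℝ (Fin d) => y j * y k)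
          (ψ := fun y : EuclideanSpace ℝ (Fin d) => y j * y k) hm hm
        exact this
      exact hindjk.integral_fun_mul_eq_mul_integral ((hcoordmeas r j).mul (hcoordmeas r k)).aestronglyMeasurable
        ((hYc j).mul (hYc k)).aestronglyMeasurable
    have step2 : ∑ j, ∑ k, (∫ ω, ξ r ω j * ξ r ω k ∂μ) * c j k
        = ∫ ω, ∑ j, ∑ k, (ξ r ω j * ξ r ω k) * c j k ∂μ := by
      rw [integral_finset_sum _ (fun j _ =>
        integrable_finset_sum _ (fun k _ => (hIrjk j k).mul_const _))]
      refine Finset.sum_congr rfl (fun j _ => ?_)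
      rw [integral_finset_sum _ (fun k _ => (hIrjk j k).mul_const _)]
      exact Finset.sum_congr rfl (fun k _ => (integral_mul_const _ _).symm)
    have hptw : ∀ ω, ∑ j, ∑ k, (ξ r ω j * ξ r ω k) * c j k ≤ β * ‖ξ r ω‖ ^ 2 := by
      intro ω
      rw [← hAz (ξ r ω)]
      exact hYvar (ξ r ω)
    have hKint : Integrable (fun ω => ∑ j, ∑ k, (ξ r ω j * ξ r ω k) * c j k) μ :=
      integrable_finset_sum _ (fun j _ =>
        integrable_finset_sum _ (fun k _ => (hIrjk j k).mul_const _))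
    calc ∫ ω, ⟪ξ r ω, Y ω⟫ ^ 2 ∂μ
        = ∫ ω, ∑ j, ∑ k, (ξ r ω j * ξ r ω k) * c j k ∂μ := step1.trans step2
      _ ≤ ∫ ω, β * ‖ξ r ω‖ ^ 2 ∂μ := integral_mono hKint ((hInt2 r).const_mul β) hptw
      _ = β * ∫ ω, ‖ξ r ω‖ ^ 2 ∂μ := integral_const_mul _ _
  -- index sets
  set Lset : Finset (Fin n) := Finset.univ.filter (fun s : Fin n => (s : ℕ) + m < a)
    with hLset
  set M1set : Finset (Fin n) :=
    Finset.univ.filter (fun s : Fin n => ¬((s : ℕ) + m < a) ∧ (s : ℕ) < a) with hM1set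
  set M2set : Finset (Fin n) := Finset.univ.filter (fun s : Fin n => a ≤ (s : ℕ)) with hM2set
  set Rset : Finset (Fin n) := Finset.univ.filter (fun s : Fin n => b + m < (s : ℕ))
    with hRset
  set R1set : Finset (Fin n) :=
    Finset.univ.filter (fun s : Fin n => ¬(b + m < (s : ℕ)) ∧ b < (s : ℕ)) with hR1set
  set R2set : Finset (Fin n) := Finset.univ.filter (fun s : Fin n => (s : ℕ) ≤ b) with hR2set
  set Tset : Finset (Fin n) :=
    Finset.univ.filter (fun s : Fin n => ¬(near m u s ∨ near m v s) ∧ near m r s) with hTset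
  -- splits
  have hsplitL : ∀ ω, (∑ i, ξ i ω)
      = (∑ s ∈ Lset, ξ s ω) + ((∑ s ∈ M1set, ξ s ω) + (∑ s ∈ M2set, ξ s ω)) := by
    intro ω
    have h1 := Finset.sum_filter_add_sum_filter_not Finset.univ
      (fun s : Fin n => (s : ℕ) + m < a) (fun s => ξ s ω)
    have h2 := Finset.sum_filter_add_sum_filter_not
      (Finset.univ.filter (fun s : Fin n => ¬((s : ℕ) + m < a)))
      (fun s : Fin n => (s : ℕ) < a) (fun s => ξ s ω)
    rw [Finset.filter_filter, Finset.filter_filter] at h2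
    have e1 : Finset.univ.filter (fun s : Fin n => ¬((s : ℕ) + m < a) ∧ (s : ℕ) < a)
        = M1set := by rw [hM1set]
    have e2 : Finset.univ.filter (fun s : Fin n => ¬((s : ℕ) + m < a) ∧ ¬(s : ℕ) < a)
        = M2set := by
      rw [hM2set]; apply Finset.filter_congr; intro s _
      constructor
      · intro hh; omega
      · intro hh; omega
    rw [e1, e2] at h2
    rw [← hLset] at h1
    rw [← h2] at h1
    exact h1.symm
  have hsplitR : ∀ ω, (∑ i, ξ i ω)
      = (∑ s ∈ Rset, ξ s ω) + ((∑ s ∈ R1set, ξ s ω) + (∑ s ∈ R2set, ξ s ω)) := by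
    intro ω
    have h1 := Finset.sum_filter_add_sum_filter_not Finset.univ
      (fun s : Fin n => b + m < (s : ℕ)) (fun s => ξ s ω)
    have h2 := Finset.sum_filter_add_sum_filter_not
      (Finset.univ.filter (fun s : Fin n => ¬(b + m < (s : ℕ))))
      (fun s : Fin n => b < (s : ℕ)) (fun s => ξ s ω)
    rw [Finset.filter_filter, Finset.filter_filter] at h2
    have e1 : Finset.univ.filter (fun s : Fin n => ¬(b + m < (s : ℕ)) ∧ b < (s : ℕ))
        = R1set := by rw [hR1set]
    have e2 : Finset.univ.filter (fun s : Fin n => ¬(b + m < (s : ℕ)) ∧ ¬b < (s : ℕ))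
        = R2set := by
      rw [hR2set]; apply Finset.filter_congr; intro s _
      constructor
      · intro hh; omega
      · intro hh; omega
    rw [e1, e2] at h2
    rw [← hRset] at h1
    rw [← h2] at h1
    exact h1.symm
  have hdisjLR : Disjoint Lset Rset := by
    rw [hLset, hRset]
    refine Finset.disjoint_left.mpr (fun s hs1 hs2 => ?_)
    simp only [Finset.mem_filter, Finset.mem_univ, true_and] at hs1 hs2
    omega
  have hsplitWuv : ∀ ω, Wuv m ξ u v ω
      = (∑ s ∈ Lset, ξ s ω) + (∑ s ∈ Tset, ξ s ω) + (∑ s ∈ Rset, ξ s ω) := by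
    intro ω
    unfold Wuv
    have h1 := Finset.sum_filter_add_sum_filter_not
      (Finset.univ.filter (fun s : Fin n => ¬(near m u s ∨ near m v s)))
      (fun s : Fin n => near m r s) (fun s => ξ s ω)
    rw [Finset.filter_filter, Finset.filter_filter] at h1
    have eT : Finset.univ.filter
        (fun s : Fin n => ¬(near m u s ∨ near m v s) ∧ near m r s) = Tset := by
      rw [hTset]
    have eLR : Finset.univ.filter
        (fun s : Fin n => ¬(near m u s ∨ near m v s) ∧ ¬near m r s) = Lset ∪ Rset := by
      rw [hLset, hRset, ← Finset.filter_or]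
      apply Finset.filter_congr; intro s _
      simp only [near, not_or, not_and, not_le]
      constructor
      · intro hh; omega
      · intro hh; omega
    rw [eT, eLR, Finset.sum_union hdisjLR] at h1
    rw [← h1]
    abel
  -- cardinalities
  have hTcard : (Tset.card : ℝ) ≤ 2 * (m:ℝ) + 1 := by
    have : Tset.card ≤ 2 * m + 1 := by
      apply card_le_interval ((r : ℕ) - m) (2 * m + 1) Tset
      intro s hs
      rw [hTset, Finset.mem_filter] at hs
      have h2 := hs.2.2
      simp only [near] at h2
      omega
    calc (Tset.card : ℝ) ≤ ((2 * m + 1 : ℕ) : ℝ) := by exact_mod_cast this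
      _ = 2 * (m:ℝ) + 1 := by push_cast; ring
  have hM1card : (M1set.card : ℝ) ≤ (m:ℝ) := by
    have : M1set.card ≤ m := by
      apply card_le_interval (a - m) m M1set
      intro s hs
      rw [hM1set, Finset.mem_filter] at hs
      omega
    exact_mod_cast this
  have hR1card : (R1set.card : ℝ) ≤ (m:ℝ) := by
    have : R1set.card ≤ m := by
      apply card_le_interval (b + 1) m R1set
      intro s hs
      rw [hR1set, Finset.mem_filter] at hs
      omega
    exact_mod_cast this
  -- independence statements
  have hindR : IndepFun (fun ω => ∑ s ∈ Rset, ξ s ω) (fun ω => ∑ s ∈ R2set, ξ s ω) μ := by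
    refine (indep_sums hdep (b + 1) R2set Rset ?_ ?_).symm
    · intro s hs; rw [hR2set, Finset.mem_filter] at hs; omega
    · intro t ht; rw [hRset, Finset.mem_filter] at ht; omega
  have hindξR : IndepFun (ξ r) (fun ω => ∑ s ∈ Rset, ξ s ω) μ := by
    have h := indep_sums hdep ((r : ℕ) + 1) {r} Rset
      (by intro s hs; rw [Finset.mem_singleton] at hs; subst hs; omega)
      (by intro t ht; rw [hRset, Finset.mem_filter] at ht; omega)
    have e : (fun ω => ∑ s ∈ ({r} : Finset (Fin n)), ξ s ω) = ξ r := by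
      funext ω; rw [Finset.sum_singleton]
    rwa [e] at h
  -- the three second-moment bounds
  set βc : ℝ := 2 + 8 * (m:ℝ) ^ 2 * δ ^ 2 with hβc
  have hβnn : 0 ≤ βc := by positivity
  have hE2nn : 0 ≤ ∫ ω, ‖ξ r ω‖ ^ 2 ∂μ := integral_nonneg (fun ω => sq_nonneg _)
  have hRbound : ∫ ω, ⟪ξ r ω, ∑ s ∈ Rset, ξ s ω⟫ ^ 2 ∂μ ≤ βc * ∫ ω, ‖ξ r ω‖ ^ 2 ∂μ := by
    apply hKey _ _ (hsum_meas Rset) (hSg Rset)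
      (hVar Rset R1set R2set hsplitR hR1card hindR) hindξR
  have hLbound : ∫ ω, ⟪ξ r ω, ∑ s ∈ Lset, ξ s ω⟫ ^ 2 ∂μ ≤ βc * ∫ ω, ‖ξ r ω‖ ^ 2 ∂μ := by
    by_cases hcase : m < a
    · have hindL : IndepFun (fun ω => ∑ s ∈ Lset, ξ s ω)
          (fun ω => ∑ s ∈ M2set, ξ s ω) μ := by
        refine indep_sums hdep (a - m) Lset M2set ?_ ?_
        · intro s hs; rw [hLset, Finset.mem_filter] at hs; omega
        · intro t ht; rw [hM2set, Finset.mem_filter] at ht; omega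
      have hindξL : IndepFun (ξ r) (fun ω => ∑ s ∈ Lset, ξ s ω) μ := by
        have h := (indep_sums hdep (a - m) Lset {r}
          (by intro s hs; rw [hLset, Finset.mem_filter] at hs; omega)
          (by intro t ht; rw [Finset.mem_singleton] at ht; subst ht; omega)).symm
        have e : (fun ω => ∑ s ∈ ({r} : Finset (Fin n)), ξ s ω) = ξ r := by
          funext ω; rw [Finset.sum_singleton]
        rwa [e] at h
      apply hKey _ _ (hsum_meas Lset) (hSg Lset)
        (hVar Lset M1set M2set hsplitL hM1card hindL) hindξL
    · have hLempty : Lset = ∅ := by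
        rw [hLset]
        apply Finset.filter_eq_empty_iff.mpr
        intro s _
        omega
      rw [hLempty]
      simp only [Finset.sum_empty, inner_zero_right]
      rw [show (fun _ : Ω => (0:ℝ) ^ 2) = fun _ : Ω => (0:ℝ) by funext; ring, integral_const]
      simp only [smul_eq_mul, mul_zero]
      positivity
  have hTbound : ∫ ω, ⟪ξ r ω, ∑ s ∈ Tset, ξ s ω⟫ ^ 2 ∂μ
      ≤ (2 * (m:ℝ) + 1) ^ 2 * (2 * δ ^ 4) := by
    have hpt : ∀ ω, ⟪ξ r ω, ∑ s ∈ Tset, ξ s ω⟫ ^ 2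
        ≤ (Tset.card : ℝ) * ∑ s ∈ Tset, ‖ξ r ω‖ ^ 2 * ‖ξ s ω‖ ^ 2 := by
      intro ω
      rw [inner_sum]
      refine le_trans sq_sum_le_card_mul_sum_sq ?_
      have hterm : ∀ s ∈ Tset, ⟪ξ r ω, ξ s ω⟫ ^ 2 ≤ ‖ξ r ω‖ ^ 2 * ‖ξ s ω‖ ^ 2 := by
        intro s _
        calc ⟪ξ r ω, ξ s ω⟫ ^ 2 = |⟪ξ r ω, ξ s ω⟫| ^ 2 := (sq_abs _).symm
          _ ≤ (‖ξ r ω‖ * ‖ξ s ω‖) ^ 2 := by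
              apply pow_le_pow_left₀ (abs_nonneg _) (abs_real_inner_le_norm _ _)
          _ = ‖ξ r ω‖ ^ 2 * ‖ξ s ω‖ ^ 2 := by ring
      exact mul_le_mul_of_nonneg_left (Finset.sum_le_sum hterm) (Nat.cast_nonneg _)
    have hIsq : Integrable (fun ω => ⟪ξ r ω, ∑ s ∈ Tset, ξ s ω⟫ ^ 2) μ := by
      refine hIntD 1 _ ((Measurable.inner (hmeas r) (hsum_meas Tset)).pow_const 2)
        (fun ω => ?_)
      rw [one_mul, abs_of_nonneg (sq_nonneg _)]
      calc ⟪ξ r ω, ∑ s ∈ Tset, ξ s ω⟫ ^ 2 = |⟪ξ r ω, ∑ s ∈ Tset, ξ s ω⟫| ^ 2 := (sq_abs _).symm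
        _ ≤ (g ω * g ω) ^ 2 := by
            apply pow_le_pow_left₀ (abs_nonneg _)
            exact le_trans (abs_real_inner_le_norm _ _)
              (mul_le_mul (hξg r ω) (hSg Tset ω) (norm_nonneg _) (hgnn ω))
        _ = g ω ^ 4 := by ring
        _ ≤ (1 + g ω) ^ 6 := hgpow ω 4 (by norm_num)
    calc ∫ ω, ⟪ξ r ω, ∑ s ∈ Tset, ξ s ω⟫ ^ 2 ∂μ
        ≤ ∫ ω, (Tset.card : ℝ) * ∑ s ∈ Tset, ‖ξ r ω‖ ^ 2 * ‖ξ s ω‖ ^ 2 ∂μ :=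
          integral_mono hIsq
            ((integrable_finset_sum _ (fun s _ => hmixInt r s)).const_mul _) hpt
      _ = (Tset.card : ℝ) * ∑ s ∈ Tset, ∫ ω, ‖ξ r ω‖ ^ 2 * ‖ξ s ω‖ ^ 2 ∂μ := by
          rw [integral_const_mul, integral_finset_sum _ (fun s _ => hmixInt r s)]
      _ ≤ (Tset.card : ℝ) * ((Tset.card : ℝ) * (2 * δ ^ 4)) := by
          have hsum : ∑ s ∈ Tset, ∫ ω, ‖ξ r ω‖ ^ 2 * ‖ξ s ω‖ ^ 2 ∂μ
              ≤ (Tset.card : ℝ) * (2 * δ ^ 4) := by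
            calc ∑ s ∈ Tset, ∫ ω, ‖ξ r ω‖ ^ 2 * ‖ξ s ω‖ ^ 2 ∂μ
                ≤ ∑ _s ∈ Tset, 2 * δ ^ 4 := Finset.sum_le_sum (fun s _ => hmix r s)
              _ = (Tset.card : ℝ) * (2 * δ ^ 4) := by rw [Finset.sum_const, nsmul_eq_mul]
          exact mul_le_mul_of_nonneg_left hsum (Nat.cast_nonneg _)
      _ ≤ (2 * (m:ℝ) + 1) * ((2 * (m:ℝ) + 1) * (2 * δ ^ 4)) := by
          have h0 : (0:ℝ) ≤ 2 * δ ^ 4 := by positivity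
          apply mul_le_mul hTcard (mul_le_mul hTcard le_rfl h0 (by positivity))
            (by positivity) (by positivity)
      _ = (2 * (m:ℝ) + 1) ^ 2 * (2 * δ ^ 4) := by ring
  -- final assembly
  have hWuvMeas : Measurable (fun ω => Wuv m ξ u v ω) := by
    rw [show (fun ω => Wuv m ξ u v ω)
        = fun ω => (∑ s ∈ Lset, ξ s ω) + (∑ s ∈ Tset, ξ s ω) + (∑ s ∈ Rset, ξ s ω) from
      funext hsplitWuv]
    exact ((hsum_meas Lset).add (hsum_meas Tset)).add (hsum_meas Rset)
  have hWuvB : ∀ ω, ‖Wuv m ξ u v ω‖ ≤ 3 * g ω := by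
    intro ω
    rw [hsplitWuv ω]
    calc ‖(∑ s ∈ Lset, ξ s ω) + (∑ s ∈ Tset, ξ s ω) + (∑ s ∈ Rset, ξ s ω)‖
        ≤ ‖(∑ s ∈ Lset, ξ s ω) + (∑ s ∈ Tset, ξ s ω)‖ + ‖∑ s ∈ Rset, ξ s ω‖ :=
          norm_add_le _ _
      _ ≤ (‖∑ s ∈ Lset, ξ s ω‖ + ‖∑ s ∈ Tset, ξ s ω‖) + ‖∑ s ∈ Rset, ξ s ω‖ := by
          have := norm_add_le (∑ s ∈ Lset, ξ s ω) (∑ s ∈ Tset, ξ s ω); linarith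
      _ ≤ 3 * g ω := by
          have h1 := hSg Lset ω; have h2 := hSg Tset ω; have h3 := hSg Rset ω; linarith
  have hIWuv : Integrable (fun ω => ⟪ξ r ω, Wuv m ξ u v ω⟫ ^ 2) μ := by
    refine hIntD 9 _ ((Measurable.inner (hmeas r) hWuvMeas).pow_const 2) (fun ω => ?_)
    rw [abs_of_nonneg (sq_nonneg _)]
    calc ⟪ξ r ω, Wuv m ξ u v ω⟫ ^ 2 = |⟪ξ r ω, Wuv m ξ u v ω⟫| ^ 2 := (sq_abs _).symm
      _ ≤ (g ω * (3 * g ω)) ^ 2 := by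
          apply pow_le_pow_left₀ (abs_nonneg _)
          exact le_trans (abs_real_inner_le_norm _ _)
            (mul_le_mul (hξg r ω) (hWuvB ω) (norm_nonneg _) (hgnn ω))
      _ = 9 * g ω ^ 4 := by ring
      _ ≤ 9 * (1 + g ω) ^ 6 := by have := hgpow ω 4 (by norm_num); linarith
  have hIL : Integrable (fun ω => ⟪ξ r ω, ∑ s ∈ Lset, ξ s ω⟫ ^ 2) μ := by
    refine hIntD 1 _ ((Measurable.inner (hmeas r) (hsum_meas Lset)).pow_const 2)
      (fun ω => ?_)
    rw [one_mul, abs_of_nonneg (sq_nonneg _)]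
    calc ⟪ξ r ω, ∑ s ∈ Lset, ξ s ω⟫ ^ 2 = |⟪ξ r ω, ∑ s ∈ Lset, ξ s ω⟫| ^ 2 := (sq_abs _).symm
      _ ≤ (g ω * g ω) ^ 2 := by
          apply pow_le_pow_left₀ (abs_nonneg _)
          exact le_trans (abs_real_inner_le_norm _ _)
            (mul_le_mul (hξg r ω) (hSg Lset ω) (norm_nonneg _) (hgnn ω))
      _ = g ω ^ 4 := by ring
      _ ≤ (1 + g ω) ^ 6 := hgpow ω 4 (by norm_num)
  have hIT : Integrable (fun ω => ⟪ξ r ω, ∑ s ∈ Tset, ξ s ω⟫ ^ 2) μ := by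
    refine hIntD 1 _ ((Measurable.inner (hmeas r) (hsum_meas Tset)).pow_const 2)
      (fun ω => ?_)
    rw [one_mul, abs_of_nonneg (sq_nonneg _)]
    calc ⟪ξ r ω, ∑ s ∈ Tset, ξ s ω⟫ ^ 2 = |⟪ξ r ω, ∑ s ∈ Tset, ξ s ω⟫| ^ 2 := (sq_abs _).symm
      _ ≤ (g ω * g ω) ^ 2 := by
          apply pow_le_pow_left₀ (abs_nonneg _)
          exact le_trans (abs_real_inner_le_norm _ _)
            (mul_le_mul (hξg r ω) (hSg Tset ω) (norm_nonneg _) (hgnn ω))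
      _ = g ω ^ 4 := by ring
      _ ≤ (1 + g ω) ^ 6 := hgpow ω 4 (by norm_num)
  have hIR : Integrable (fun ω => ⟪ξ r ω, ∑ s ∈ Rset, ξ s ω⟫ ^ 2) μ := by
    refine hIntD 1 _ ((Measurable.inner (hmeas r) (hsum_meas Rset)).pow_const 2)
      (fun ω => ?_)
    rw [one_mul, abs_of_nonneg (sq_nonneg _)]
    calc ⟪ξ r ω, ∑ s ∈ Rset, ξ s ω⟫ ^ 2 = |⟪ξ r ω, ∑ s ∈ Rset, ξ s ω⟫| ^ 2 := (sq_abs _).symm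
      _ ≤ (g ω * g ω) ^ 2 := by
          apply pow_le_pow_left₀ (abs_nonneg _)
          exact le_trans (abs_real_inner_le_norm _ _)
            (mul_le_mul (hξg r ω) (hSg Rset ω) (norm_nonneg _) (hgnn ω))
      _ = g ω ^ 4 := by ring
      _ ≤ (1 + g ω) ^ 6 := hgpow ω 4 (by norm_num)
  have hfinal_pt : ∀ ω, ⟪ξ r ω, Wuv m ξ u v ω⟫ ^ 2
      ≤ 3 * ⟪ξ r ω, ∑ s ∈ Lset, ξ s ω⟫ ^ 2 + 3 * ⟪ξ r ω, ∑ s ∈ Tset, ξ s ω⟫ ^ 2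
        + 3 * ⟪ξ r ω, ∑ s ∈ Rset, ξ s ω⟫ ^ 2 := by
    intro ω
    rw [hsplitWuv ω, inner_add_right, inner_add_right]
    exact sq_add_add_le _ _ _
  have hM0 : (m:ℝ) ≤ ((max m 1 : ℕ) : ℝ) := by exact_mod_cast le_max_left m 1
  have hM1 : (1:ℝ) ≤ ((max m 1 : ℕ) : ℝ) := by exact_mod_cast le_max_right m 1
  have hE2le : ∫ ω, ‖ξ r ω‖ ^ 2 ∂μ ≤ 2 * δ ^ 2 := hmom2 r
  calc ∫ ω, ⟪ξ r ω, Wuv m ξ u v ω⟫ ^ 2 ∂μ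
      ≤ ∫ ω, (3 * ⟪ξ r ω, ∑ s ∈ Lset, ξ s ω⟫ ^ 2 + 3 * ⟪ξ r ω, ∑ s ∈ Tset, ξ s ω⟫ ^ 2
        + 3 * ⟪ξ r ω, ∑ s ∈ Rset, ξ s ω⟫ ^ 2) ∂μ :=
        integral_mono hIWuv (((hIL.const_mul 3).add (hIT.const_mul 3)).add
          (hIR.const_mul 3)) hfinal_pt
    _ = 3 * (∫ ω, ⟪ξ r ω, ∑ s ∈ Lset, ξ s ω⟫ ^ 2 ∂μ)
        + 3 * (∫ ω, ⟪ξ r ω, ∑ s ∈ Tset, ξ s ω⟫ ^ 2 ∂μ)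
        + 3 * (∫ ω, ⟪ξ r ω, ∑ s ∈ Rset, ξ s ω⟫ ^ 2 ∂μ) := by
        rw [integral_add (f := fun ω => 3 * ⟪ξ r ω, ∑ s ∈ Lset, ξ s ω⟫ ^ 2
              + 3 * ⟪ξ r ω, ∑ s ∈ Tset, ξ s ω⟫ ^ 2)
            (g := fun ω => 3 * ⟪ξ r ω, ∑ s ∈ Rset, ξ s ω⟫ ^ 2)
            ((hIL.const_mul 3).add (hIT.const_mul 3)) (hIR.const_mul 3),
          integral_add (f := fun ω => 3 * ⟪ξ r ω, ∑ s ∈ Lset, ξ s ω⟫ ^ 2)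
            (g := fun ω => 3 * ⟪ξ r ω, ∑ s ∈ Tset, ξ s ω⟫ ^ 2)
            (hIL.const_mul 3) (hIT.const_mul 3),
          integral_const_mul, integral_const_mul, integral_const_mul]
    _ ≤ 1000 * ((∫ ω, ‖ξ r ω‖ ^ 2 ∂μ) + ((max m 1 : ℕ) : ℝ) ^ 2 * δ ^ 4) := by
        set E2 : ℝ := ∫ ω, ‖ξ r ω‖ ^ 2 ∂μ with hE2
        set M : ℝ := ((max m 1 : ℕ) : ℝ) with hM
        have k1 : (m:ℝ) ^ 2 * δ ^ 2 * E2 ≤ 2 * M ^ 2 * δ ^ 4 := by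
          calc (m:ℝ) ^ 2 * δ ^ 2 * E2 ≤ (m:ℝ) ^ 2 * δ ^ 2 * (2 * δ ^ 2) := by
                apply mul_le_mul_of_nonneg_left hE2le (by positivity)
            _ ≤ M ^ 2 * δ ^ 2 * (2 * δ ^ 2) := by
                have hmM : (m:ℝ) ^ 2 ≤ M ^ 2 := by
                  apply pow_le_pow_left₀ (Nat.cast_nonneg _) hM0
                have hδδ : (0:ℝ) ≤ δ ^ 2 * (2 * δ ^ 2) := by positivity
                nlinarith [mul_le_mul_of_nonneg_right hmM hδδ]
            _ = 2 * M ^ 2 * δ ^ 4 := by ring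
        have k2 : (2 * (m:ℝ) + 1) ^ 2 * (2 * δ ^ 4) ≤ 18 * M ^ 2 * δ ^ 4 := by
          have h1 : 2 * (m:ℝ) + 1 ≤ 3 * M := by linarith
          have h2 : (2 * (m:ℝ) + 1) ^ 2 ≤ (3 * M) ^ 2 := by
            apply pow_le_pow_left₀ (by positivity) h1
          nlinarith [pow_nonneg hδ.le 4]
        have hMδnn : 0 ≤ M ^ 2 * δ ^ 4 := by positivity
        have hL := hLbound; have hR := hRbound; have hT := hTbound
        have hβE : βc * E2 ≤ 2 * E2 + 8 * ((m:ℝ) ^ 2 * δ ^ 2 * E2) := by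
          rw [hβc]; nlinarith [hE2nn]
        nlinarith [hL, hR, hT, hβE, k1, k2, hE2nn, hMδnn]


end Paper
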